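/- Let t = {t₀ < t₁ < ... < t_n} ⊆ {1,...,m} and let z be any convex combination of the vectors {z_{(τ)} : τ ⊂ t, |τ| = n}. Then (−1)^{n−k} z_{t_k} ≥ 0 for k = 0,1,...,n; moreover z_i ≥ 0 for all i > t_n, and (−1)^n z_i ≥ 0 for all i < t₀. -/

import Mathlib

open Finset

/-- `z_{(τ)}`, the extreme relative residual vector: `z_{(τ),i} = ∏_{j∈τ}(1 - λ_i/λ_j)`. -/
noncomputable def zTau {m : ℕ} (l : Fin m → ℝ) (τ : Finset (Fin m)) : Fin m → ℝ :=
  fun i => ∏ j ∈ τ, (1 - l i / l j)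

lemma prod_neg_aux {α : Type*} (s : Finset α) (f : α → ℝ) :
    ∏ j ∈ s, (-f j) = (-1 : ℝ) ^ s.card * ∏ j ∈ s, f j := by
  rw [show (fun j => -f j) = (fun j => (-1:ℝ) * f j) from funext (fun j => by ring)]
  rw [Finset.prod_mul_distrib, Finset.prod_const]

lemma sign_lemma {m : ℕ} (l : Fin m → ℝ) (hpos : ∀ i, 0 < l i) (hanti : StrictAnti l)
    (τ : Finset (Fin m)) (i : Fin m) :
    0 ≤ (-1 : ℝ) ^ ((τ.filter (fun j => i < j)).card) * zTau l τ i := by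
  by_cases hi : i ∈ τ
  · have : zTau l τ i = 0 := by
      apply Finset.prod_eq_zero hi
      have := (hpos i).ne'
      field_simp
      norm_num
    simp [this]
  · unfold zTau
    rw [← Finset.prod_filter_mul_prod_filter_not τ (fun j => i < j), ← mul_assoc,
      ← prod_neg_aux]
    apply mul_nonneg
    · apply Finset.prod_nonneg
      intro j hj
      simp only [Finset.mem_filter] at hj
      have hlt : l j < l i := hanti hj.2
      have : 1 < l i / l j := (one_lt_div (hpos j)).mpr hlt
      linarith
    · apply Finset.prod_nonneg
      intro j hj
      simp only [Finset.mem_filter, not_lt] at hj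
      have hjlt : j < i := lt_of_le_of_ne hj.2 (fun h => hi (h ▸ hj.1))
      have hlt : l i < l j := hanti hjlt
      have : l i / l j < 1 := (div_lt_one (hpos j)).mpr hlt
      linarith

theorem stmt7 {m n : ℕ} (l : Fin m → ℝ) (hpos : ∀ i, 0 < l i) (hanti : StrictAnti l)
    (t : Finset (Fin m)) (ht : t.card = n + 1)
    (c : Fin (n + 1) → ℝ) (hc : ∀ k, 0 ≤ c k) (hc1 : ∑ k, c k = 1)
    (z : Fin m → ℝ)
    (hz : z = fun i => ∑ k : Fin (n + 1), c k * zTau l (t.erase (t.orderEmbOfFin ht k)) i) :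
    (∀ k : Fin (n + 1), 0 ≤ (-1 : ℝ) ^ (n - (k : ℕ)) * z (t.orderEmbOfFin ht k)) ∧
      (∀ i : Fin m, t.orderEmbOfFin ht (Fin.last n) < i → 0 ≤ z i) ∧
      (∀ i : Fin m, i < t.orderEmbOfFin ht 0 → 0 ≤ (-1 : ℝ) ^ n * z i) := by
  set e := t.orderEmbOfFin ht with he
  have hmem : ∀ k, e k ∈ t := fun k => t.orderEmbOfFin_mem ht k
  have hsurj : ∀ j ∈ t, ∃ k, e k = j := by
    intro j hj
    have := t.range_orderEmbOfFin ht
    have : j ∈ Set.range e := by rw [this]; exact hj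
    exact this
  subst hz
  refine ⟨?_, ?_, ?_⟩
  · intro k
    -- all terms except k vanish
    have hzero : ∀ j : Fin (n + 1), j ≠ k →
        c j * zTau l (t.erase (e j)) (e k) = 0 := by
      intro j hj
      have hk : e k ∈ t.erase (e j) :=
        Finset.mem_erase.mpr ⟨fun h => hj (e.injective h).symm, hmem k⟩
      have : zTau l (t.erase (e j)) (e k) = 0 := by
        apply Finset.prod_eq_zero hk
        have := (hpos (e k)).ne'
        field_simp
        norm_num
      simp [this]
    have hsum : (∑ j : Fin (n + 1), c j * zTau l (t.erase (e j)) (e k))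
        = c k * zTau l (t.erase (e k)) (e k) :=
      Fintype.sum_eq_single k hzero
    simp only [hsum]
    -- card of filter
    have hfe : (t.erase (e k)).filter (fun j => e k < j) = t.filter (fun j => e k < j) := by
      ext j
      simp only [Finset.mem_filter, Finset.mem_erase]
      constructor
      · rintro ⟨⟨_, hj⟩, hlt⟩; exact ⟨hj, hlt⟩
      · rintro ⟨hj, hlt⟩; exact ⟨⟨ne_of_gt hlt, hj⟩, hlt⟩
    have himg : t.filter (fun j => e k < j) = (Finset.Ioi k).image e := by
      ext j
      simp only [Finset.mem_filter, Finset.mem_image, Finset.mem_Ioi]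
      constructor
      · rintro ⟨hj, hlt⟩
        obtain ⟨a, rfl⟩ := hsurj j hj
        exact ⟨a, (t.orderEmbOfFin ht).lt_iff_lt.mp hlt, rfl⟩
      · rintro ⟨a, ha, rfl⟩
        exact ⟨hmem a, (t.orderEmbOfFin ht).lt_iff_lt.mpr ha⟩
    have hcard : ((t.erase (e k)).filter (fun j => e k < j)).card = n - (k : ℕ) := by
      rw [hfe, himg, Finset.card_image_of_injective _ e.injective, Fin.card_Ioi]
      simp
    have := sign_lemma l hpos hanti (t.erase (e k)) (e k)
    rw [hcard] at this
    calc (0:ℝ) ≤ c k * ((-1) ^ (n - (k:ℕ)) * zTau l (t.erase (e k)) (e k)) :=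
          mul_nonneg (hc k) this
      _ = (-1) ^ (n - (k:ℕ)) * (c k * zTau l (t.erase (e k)) (e k)) := by ring
  · intro i hi
    apply Finset.sum_nonneg
    intro k _
    apply mul_nonneg (hc k)
    have hfilt : (t.erase (e k)).filter (fun j => i < j) = ∅ := by
      rw [Finset.filter_eq_empty_iff]
      intro j hj
      have hjt : j ∈ t := Finset.mem_of_mem_erase hj
      obtain ⟨a, rfl⟩ := hsurj j hjt
      have : e a ≤ e (Fin.last n) := e.le_iff_le.mpr (Fin.le_last a)
      exact not_lt.mpr (le_trans this (le_of_lt hi))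
    have := sign_lemma l hpos hanti (t.erase (e k)) i
    rw [hfilt] at this
    simpa using this
  · intro i hi
    rw [Finset.mul_sum]
    apply Finset.sum_nonneg
    intro k _
    have hfilt : (t.erase (e k)).filter (fun j => i < j) = t.erase (e k) := by
      rw [Finset.filter_eq_self]
      intro j hj
      have hjt : j ∈ t := Finset.mem_of_mem_erase hj
      obtain ⟨a, rfl⟩ := hsurj j hjt
      have : e 0 ≤ e a := e.le_iff_le.mpr (Fin.zero_le a)
      exact lt_of_lt_of_le hi this
    have hcard : (t.erase (e k)).card = n := by
      rw [Finset.card_erase_of_mem (hmem k), ht]; simp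
    have := sign_lemma l hpos hanti (t.erase (e k)) i
    rw [hfilt, hcard] at this
    calc (0:ℝ) ≤ c k * ((-1) ^ n * zTau l (t.erase (e k)) i) := mul_nonneg (hc k) this
      _ = (-1) ^ n * (c k * zTau l (t.erase (e k)) i) := by ring
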